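/- Let G be a minimally bad graph and O a bad connected order of G with greedy colouring π = π_{G,O}. Suppose S is a clique cutset of G and C is a connected component of G∖S such that max(S) < min(C), and set v = min(C). If v is adjacent to every vertex of S, then there exists u ∈ S ∪ {v} such that π(u) > |S| + 1. -/

import Mathlib

open Classical in
noncomputable def greedyStep {V : Type*} (G : SimpleGraph V) (f : V → ℕ) (v : V) : V → ℕ :=
  fun u => if u = v then sInf {c : ℕ | 1 ≤ c ∧ ∀ w, G.Adj v w → f w ≠ c} else f u

noncomputable def greedyFrom {V : Type*} (G : SimpleGraph V) (f : V → ℕ) (l : List V) : V → ℕ :=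
  l.foldl (greedyStep G) f

noncomputable def greedy {V : Type*} (G : SimpleGraph V) (l : List V) : V → ℕ :=
  greedyFrom G (fun _ => 0) l

open Classical in
noncomputable def greedyStart2 {V : Type*} (G : SimpleGraph V) : List V → V → ℕ
  | [] => fun _ => 0
  | v :: rest => greedyFrom G (fun u => if u = v then 2 else 0) rest

noncomputable def chi {V : Type*} [Fintype V] (G : SimpleGraph V) : ℕ :=
  sInf {n : ℕ | G.Colorable n}

open Classical in
noncomputable def idx {V : Type*} (l : List V) (v : V) : ℕ := l.idxOf v

noncomputable def maxIdx {V : Type*} (l : List V) (A : Set V) : ℕ := sSup (idx l '' A)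
noncomputable def minIdx {V : Type*} (l : List V) (A : Set V) : ℕ := sInf (idx l '' A)

def IsConnOrder {V : Type*} (G : SimpleGraph V) (l : List V) : Prop :=
  l.Nodup ∧ (∀ v : V, v ∈ l) ∧
    ∀ i : Fin l.length, 0 < i.1 → ∃ j : Fin l.length, j.1 < i.1 ∧ G.Adj (l.get j) (l.get i)

def GoodOrder {V : Type*} [Fintype V] (G : SimpleGraph V) (l : List V) : Prop :=
  ∀ v : V, greedy G l v ≤ chi G

def Good {V : Type*} [Fintype V] (G : SimpleGraph V) : Prop :=
  ∀ s : Finset V, (G.induce (↑s : Set V)).Connected →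
    ∀ l : List ↥(↑s : Set V), IsConnOrder (G.induce (↑s : Set V)) l →
      GoodOrder (G.induce (↑s : Set V)) l

def BadOrder {V : Type*} [Fintype V] (G : SimpleGraph V) (l : List V) : Prop :=
  IsConnOrder G l ∧ ¬ GoodOrder G l

def MinimallyBad {V : Type*} [Fintype V] (G : SimpleGraph V) : Prop :=
  ¬ Good G ∧ ∀ s : Finset V, s ≠ Finset.univ →
    (G.induce (↑s : Set V)).Connected → Good (G.induce (↑s : Set V))

def IsInducedPath {V : Type*} (G : SimpleGraph V) (P : List V) : Prop :=
  P.Nodup ∧ ∀ i j : Fin P.length,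
    G.Adj (P.get i) (P.get j) ↔ (i.1 + 1 = j.1 ∨ j.1 + 1 = i.1)

def IsFlatPath {V : Type*} (G : SimpleGraph V) (P : List V) : Prop :=
  IsInducedPath G P ∧
    ∀ i : Fin P.length, 0 < i.1 → i.1 + 1 < P.length → (G.neighborSet (P.get i)).ncard = 2

def WellOrderedPath {V : Type*} (l P : List V) : Prop :=
  P.Pairwise (fun u v => idx l u < idx l v) ∨ P.Pairwise (fun u v => idx l v < idx l u)

def IsMaxFlatPath {V : Type*} (G : SimpleGraph V) (P : List V) : Prop :=
  IsFlatPath G P ∧ ∀ h : P ≠ [],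
    (G.neighborSet (P.head h)).ncard ≠ 2 ∧ (G.neighborSet (P.getLast h)).ncard ≠ 2

def ClawFree {V : Type*} (G : SimpleGraph V) : Prop :=
  ∀ a b c d : V, G.Adj a b → G.Adj a c → G.Adj a d → b ≠ c → b ≠ d → c ≠ d →
    G.Adj b c ∨ G.Adj b d ∨ G.Adj c d

def IsHole {V : Type*} (G : SimpleGraph V) (C : List V) : Prop :=
  4 ≤ C.length ∧ C.Nodup ∧
    ∀ i j : Fin C.length, G.Adj (C.get i) (C.get j) ↔
      ((i.1 + 1) % C.length = j.1 ∨ (j.1 + 1) % C.length = i.1)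

def GemFree {V : Type*} (G : SimpleGraph V) : Prop :=
  ¬ ∃ a b c d e : V, G.Adj a b ∧ G.Adj b c ∧ G.Adj c d ∧
    ¬ G.Adj a c ∧ ¬ G.Adj a d ∧ ¬ G.Adj b d ∧
    G.Adj e a ∧ G.Adj e b ∧ G.Adj e c ∧ G.Adj e d

section Aux
open Classical

variable {V : Type*}

lemma greedyFrom_cons (G : SimpleGraph V) (f : V → ℕ) (x : V) (t : List V) :
    greedyFrom G f (x :: t) = greedyFrom G (greedyStep G f x) t := rfl

lemma greedyStep_ne (G : SimpleGraph V) (f : V → ℕ) {v u : V} (h : u ≠ v) :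
    greedyStep G f v u = f u := if_neg h

lemma greedyStep_self (G : SimpleGraph V) (f : V → ℕ) (v : V) :
    greedyStep G f v v = sInf {c : ℕ | 1 ≤ c ∧ ∀ w, G.Adj v w → f w ≠ c} := if_pos rfl

lemma greedyFrom_not_mem (G : SimpleGraph V) :
    ∀ (L : List V) (f : V → ℕ) (u : V), u ∉ L → greedyFrom G f L u = f u := by
  intro L
  induction L with
  | nil => intro f u _; rfl
  | cons x t ih =>
    intro f u hu
    rw [greedyFrom_cons]
    rw [ih _ u (fun h => hu (List.mem_cons_of_mem _ h))]
    exact greedyStep_ne G f (fun h => hu (h ▸ List.mem_cons_self))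

lemma forbid_congr (G : SimpleGraph V) (v : V) (g₁ g₂ : V → ℕ)
    (h : ∀ w, G.Adj v w → g₁ w = g₂ w) :
    {c : ℕ | 1 ≤ c ∧ ∀ w, G.Adj v w → g₁ w ≠ c} =
      {c : ℕ | 1 ≤ c ∧ ∀ w, G.Adj v w → g₂ w ≠ c} := by
  ext c
  constructor
  · rintro ⟨h1, h2⟩; exact ⟨h1, fun w hw => (h w hw) ▸ h2 w hw⟩
  · rintro ⟨h1, h2⟩; exact ⟨h1, fun w hw => (h w hw) ▸ h2 w hw⟩

/-- characterization of greedyFrom -/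
lemma greedyFrom_char (G : SimpleGraph V) :
    ∀ (L : List V), L.Nodup → ∀ (f F : V → ℕ),
      (∀ u, u ∉ L → F u = f u) →
      (∀ (i : ℕ) (h : i < L.length),
        F (L.get ⟨i, h⟩) = sInf {c : ℕ | 1 ≤ c ∧ ∀ w, G.Adj (L.get ⟨i, h⟩) w →
          (if w ∈ L.drop (i+1) then f w else F w) ≠ c}) →
      ∀ u, greedyFrom G f L u = F u := by
  intro L
  induction L with
  | nil => intro _ f F hout _ u; exact (hout u List.not_mem_nil).symm
  | cons x t ih =>
    intro hnd f F hout hrec u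
    have hxt : x ∉ t := (List.nodup_cons.mp hnd).1
    rw [greedyFrom_cons]
    refine ih (List.nodup_cons.mp hnd).2 (greedyStep G f x) F ?_ ?_ u
    · intro u hu
      by_cases hux : u = x
      · rw [hux, greedyStep_self]
        have h0 := hrec 0 (by simp)
        simp only [List.get] at h0
        rw [h0]
        have hdrop : (x :: t).drop 1 = t := rfl
        rw [hdrop]
        apply congrArg
        refine (forbid_congr G x _ _ ?_)
        intro w hw
        by_cases hwt : w ∈ t
        · simp [hwt]
        · have hwx : w ≠ x := fun h => (G.ne_of_adj hw) h.symm
          simp only [hwt, if_false]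
          exact hout w (by simp [hwx, hwt])
      · rw [hout u (by simp [hux, hu]), greedyStep_ne G f hux]
    · intro i h
      have h' : i + 1 < (x :: t).length := by simpa using Nat.succ_lt_succ h
      have hget : (x :: t).get ⟨i+1, h'⟩ = t.get ⟨i, h⟩ := rfl
      have h0 := hrec (i+1) h'
      rw [hget] at h0
      rw [h0]
      apply congrArg
      refine forbid_congr G _ _ _ ?_
      intro w _
      have hdrop : (x :: t).drop (i+1+1) = t.drop (i+1) := rfl
      rw [hdrop]
      by_cases hwd : w ∈ t.drop (i+1)
      · have hwx : w ≠ x := fun h => hxt (h ▸ List.mem_of_mem_drop hwd)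
        simp [hwd, greedyStep_ne G f hwx]
      · simp [hwd]

/-- the recurrence satisfied by greedyFrom -/
lemma greedyFrom_spec (G : SimpleGraph V) :
    ∀ (L : List V), L.Nodup → ∀ (f : V → ℕ) (i : ℕ) (h : i < L.length),
      greedyFrom G f L (L.get ⟨i, h⟩) =
        sInf {c : ℕ | 1 ≤ c ∧ ∀ w, G.Adj (L.get ⟨i, h⟩) w →
          (if w ∈ L.drop (i+1) then f w else greedyFrom G f L w) ≠ c} := by
  intro L
  induction L with
  | nil => intro _ f i h; simp at h
  | cons x t ih =>
    intro hnd f i h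
    have hxt : x ∉ t := (List.nodup_cons.mp hnd).1
    match i with
    | 0 =>
      have hget : (x :: t).get ⟨0, h⟩ = x := rfl
      rw [hget, greedyFrom_cons, greedyFrom_not_mem G t _ x hxt, greedyStep_self]
      apply congrArg
      refine forbid_congr G x _ _ ?_
      intro w hw
      have hwx : w ≠ x := fun h => (G.ne_of_adj hw) h.symm
      have hdrop : (x :: t).drop 1 = t := rfl
      rw [hdrop]
      by_cases hwt : w ∈ t
      · simp [hwt]
      · rw [if_neg hwt, greedyFrom_not_mem G t _ w hwt, greedyStep_ne G f hwx]
    | i + 1 =>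
      have h2 : i < t.length := by simpa using Nat.lt_of_succ_lt_succ h
      have hget : (x :: t).get ⟨i+1, h⟩ = t.get ⟨i, h2⟩ := rfl
      rw [hget, greedyFrom_cons, ih (List.nodup_cons.mp hnd).2 (greedyStep G f x) i h2]
      apply congrArg
      refine forbid_congr G _ _ _ ?_
      intro w _
      have hdrop : (x :: t).drop (i+1+1) = t.drop (i+1) := rfl
      rw [hdrop]
      by_cases hwd : w ∈ t.drop (i+1)
      · have hwx : w ≠ x := fun h => hxt (h ▸ List.mem_of_mem_drop hwd)
        simp [hwd, greedyStep_ne G f hwx]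
      · simp [hwd, greedyFrom_cons]

lemma sInf_eq_of_mem (a : ℕ) (s : Set ℕ) (ha : a ∈ s) (h : ∀ b < a, b ∉ s) : sInf s = a := by
  refine le_antisymm (Nat.sInf_le ha) ?_
  by_contra hlt
  push_neg at hlt
  exact h _ hlt (Nat.sInf_mem ⟨a, ha⟩)

lemma forbid_nonempty [Fintype V] (G : SimpleGraph V) (v : V) (g : V → ℕ) :
    (Finset.univ.sup g + 1) ∈ {c : ℕ | 1 ≤ c ∧ ∀ w, G.Adj v w → g w ≠ c} := by
  refine ⟨Nat.succ_le_succ (Nat.zero_le _), fun w _ hw => ?_⟩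
  have := Finset.le_sup (f := g) (Finset.mem_univ w)
  omega

lemma idx_indexOf (l : List V) (v : V) : idx l v = l.idxOf v := rfl

lemma idx_lt_length {l : List V} {v : V} (h : v ∈ l) : idx l v < l.length :=
  List.idxOf_lt_length_iff.mpr h

lemma get_idx {l : List V} {v : V} (h : idx l v < l.length) : l.get ⟨idx l v, h⟩ = v :=
  List.idxOf_get h

lemma idx_get {l : List V} (hnd : l.Nodup) (i : Fin l.length) : idx l (l.get i) = i :=
  List.get_idxOf hnd i

lemma idx_get' {l : List V} (hnd : l.Nodup) {i : ℕ} (h : i < l.length) :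
    idx l (l.get ⟨i, h⟩) = i := by
  have := idx_get hnd ⟨i, h⟩
  simpa using this

lemma idx_inj {l : List V} (hnd : l.Nodup) {a b : V} (ha : a ∈ l) (hb : b ∈ l)
    (h : idx l a = idx l b) : a = b := by
  have h1 := get_idx (idx_lt_length ha)
  have h2 := get_idx (idx_lt_length hb)
  rw [← h1, ← h2]
  congr 1
  exact Fin.ext h

lemma mem_drop_iff_le_idx : ∀ (L : List V), L.Nodup → ∀ (w : V), w ∈ L → ∀ (n : ℕ),
    (w ∈ L.drop n ↔ n ≤ idx L w) := by
  intro L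
  induction L with
  | nil => intro _ w hw; simp at hw
  | cons x t ih =>
    intro hnd w hw n
    match n with
    | 0 => simp [hw]
    | n + 1 =>
      have hdrop : (x :: t).drop (n+1) = t.drop n := rfl
      rw [hdrop, idx_indexOf]
      by_cases hwx : w = x
      · subst hwx
        have hxt : w ∉ t := (List.nodup_cons.mp hnd).1
        rw [List.idxOf_cons_self]
        exact ⟨fun h => absurd (List.mem_of_mem_drop h) hxt, fun h => by omega⟩
      · rw [List.idxOf_cons_ne _ (fun h => hwx h.symm)]
        have hwt : w ∈ t := by
          rcases List.mem_cons.mp hw with h | h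
          · exact absurd h hwx
          · exact h
        rw [ih (List.nodup_cons.mp hnd).2 w hwt n, idx_indexOf]
        omega

lemma not_mem_drop_succ_self {L : List V} (hnd : L.Nodup) {i : ℕ} (h : i < L.length) :
    L.get ⟨i, h⟩ ∉ L.drop (i+1) := by
  intro hmem
  have := (mem_drop_iff_le_idx L hnd _ (L.get_mem ⟨i, h⟩) (i+1)).mp hmem
  rw [idx_get' hnd] at this
  omega

lemma mem_drop_get_iff {L : List V} (hnd : L.Nodup) {i : ℕ} (h : i < L.length)
    {w : V} (hw : w ∈ L) : w ∈ L.drop (i+1) ↔ idx L (L.get ⟨i, h⟩) < idx L w := by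
  rw [mem_drop_iff_le_idx L hnd w hw, idx_get' hnd]
  omega

lemma before_filter_of_before : ∀ (L : List V) (p : V → Bool) (a b : V),
    a ∈ L.filter p → b ∈ L.filter p → idx L a < idx L b →
      idx (L.filter p) a < idx (L.filter p) b := by
  intro L
  induction L with
  | nil => intro p a b ha; simp at ha
  | cons x t ih =>
    intro p a b ha hb hab
    simp only [idx_indexOf] at hab ⊢
    by_cases hax : a = x
    · subst hax
      have hpa : p a = true := (List.mem_filter.mp ha).2
      have hbx : b ≠ a := by
        intro h; subst h; omega
      rw [List.filter_cons_of_pos hpa, List.idxOf_cons_self,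
        List.idxOf_cons_ne _ (fun h => hbx h.symm)]
      omega
    · have hbx : b ≠ x := by
        intro h; subst h
        rw [List.idxOf_cons_self] at hab; omega
      have hat : a ∈ t.filter p := by
        rcases List.mem_filter.mp ha with ⟨hal, hpa⟩
        rcases List.mem_cons.mp hal with h | h
        · exact absurd h hax
        · exact List.mem_filter.mpr ⟨h, hpa⟩
      have hbt : b ∈ t.filter p := by
        rcases List.mem_filter.mp hb with ⟨hbl, hpb⟩
        rcases List.mem_cons.mp hbl with h | h
        · exact absurd h hbx
        · exact List.mem_filter.mpr ⟨h, hpb⟩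
      have habt : idx t a < idx t b := by
        rw [List.idxOf_cons_ne _ (fun h => hax h.symm),
          List.idxOf_cons_ne _ (fun h => hbx h.symm)] at hab
        simp only [idx_indexOf]
        omega
      have := ih p a b hat hbt habt
      simp only [idx_indexOf] at this
      by_cases hpx : p x = true
      · rw [List.filter_cons_of_pos hpx,
          List.idxOf_cons_ne _ (fun h => hax h.symm),
          List.idxOf_cons_ne _ (fun h => hbx h.symm)]
        omega
      · rw [List.filter_cons_of_neg (by simpa using hpx)]
        exact this

lemma before_filter_iff {L : List V} (hnd : L.Nodup) (p : V → Bool) {a b : V}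
    (ha : a ∈ L.filter p) (hb : b ∈ L.filter p) :
    idx (L.filter p) a < idx (L.filter p) b ↔ idx L a < idx L b := by
  have haL : a ∈ L := (List.mem_filter.mp ha).1
  have hbL : b ∈ L := (List.mem_filter.mp hb).1
  constructor
  · intro h
    by_contra hc
    push_neg at hc
    rcases Nat.lt_or_ge (idx L b) (idx L a) with h2 | h2
    · have := before_filter_of_before L p b a hb ha h2
      omega
    · have hab : a = b := idx_inj hnd haL hbL (by omega)
      subst hab; omega
  · exact before_filter_of_before L p a b ha hb

lemma greedy_mem_spec [Fintype V] (G : SimpleGraph V) {l : List V} (hnd : l.Nodup)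
    {x : V} (hx : x ∈ l) :
    1 ≤ greedy G l x ∧ ∀ w, G.Adj x w → idx l w < idx l x → greedy G l w ≠ greedy G l x := by
  have hlt : idx l x < l.length := idx_lt_length hx
  have hspec := greedyFrom_spec G l hnd (fun _ => 0) (idx l x) hlt
  rw [get_idx hlt] at hspec
  have hne : {c : ℕ | 1 ≤ c ∧ ∀ w, G.Adj x w →
      (if w ∈ l.drop (idx l x + 1) then (0:ℕ) else greedyFrom G (fun _ => 0) l w) ≠ c}.Nonempty :=
    ⟨_, forbid_nonempty G x _⟩
  have hmem := Nat.sInf_mem hne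
  rw [← hspec] at hmem
  obtain ⟨h1, h2⟩ := hmem
  refine ⟨h1, fun w hw hwlt => ?_⟩
  have hwl : w ∈ l := by
    by_contra hwl
    rw [idx_indexOf, List.idxOf_eq_length hwl] at hwlt
    have := idx_lt_length hx
    omega
  have hnd2 := h2 w hw
  rw [if_neg (fun hmem2 => by
    have := (mem_drop_iff_le_idx l hnd w hwl _).mp hmem2
    omega)] at hnd2
  exact hnd2

lemma greedy_pos [Fintype V] (G : SimpleGraph V) {l : List V} (hnd : l.Nodup)
    {x : V} (hx : x ∈ l) : 1 ≤ greedy G l x := (greedy_mem_spec G hnd hx).1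

lemma greedy_adj_ne [Fintype V] (G : SimpleGraph V) {l : List V} (hnd : l.Nodup)
    {a b : V} (ha : a ∈ l) (hb : b ∈ l) (hab : G.Adj a b) :
    greedy G l a ≠ greedy G l b := by
  have hne : a ≠ b := G.ne_of_adj hab
  have hidx : idx l a ≠ idx l b := fun h => hne (idx_inj hnd ha hb h)
  rcases Nat.lt_or_ge (idx l a) (idx l b) with h | h
  · exact fun hc => (greedy_mem_spec G hnd hb).2 a hab.symm h hc
  · have h' : idx l b < idx l a := by omega
    exact fun hc => ((greedy_mem_spec G hnd ha).2 b hab h' hc.symm)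

lemma induce_adj_iff {s : Set V} (G : SimpleGraph V) (a b : ↥s) :
    (G.induce s).Adj a b ↔ G.Adj ↑a ↑b := by
  simp [SimpleGraph.comap_adj]

/-- transfer of greedyFrom to induced subgraphs -/
lemma greedyFrom_induce (G : SimpleGraph V) (s : Set V) :
    ∀ (L : List ↥s) (f : V → ℕ), (∀ w, w ∉ s → f w = 0) →
      ∀ u : ↥s, greedyFrom (G.induce s) (fun z => f ↑z) L u
        = greedyFrom G f (L.map Subtype.val) ↑u := by
  intro L
  induction L with
  | nil => intro f _ u; rfl
  | cons x t ih =>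
    intro f hf u
    rw [List.map_cons, greedyFrom_cons, greedyFrom_cons]
    have hstep : (fun z : ↥s => greedyStep G f ↑x ↑z)
        = greedyStep (G.induce s) (fun z => f ↑z) x := by
      funext z
      by_cases hz : z = x
      · subst hz
        rw [greedyStep_self, greedyStep_self]
        congr 1
        ext c
        simp only [Set.mem_setOf_eq, and_congr_right_iff]
        intro hc
        constructor
        · intro h w hw
          exact h ↑w ((induce_adj_iff G z w).mp hw)
        · intro h w hw
          by_cases hws : w ∈ s
          · exact h ⟨w, hws⟩ ((induce_adj_iff G z ⟨w, hws⟩).mpr hw)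
          · rw [hf w hws]; omega
      · have hzx : (↑z : V) ≠ ↑x := fun h => hz (Subtype.ext h)
        rw [greedyStep_ne G f hzx, greedyStep_ne _ _ hz]
    have hf' : ∀ w, w ∉ s → greedyStep G f ↑x w = 0 := by
      intro w hw
      rw [greedyStep_ne G f (fun h : w = ↑x => hw (by rw [h]; exact x.2))]
      exact hf w hw
    rw [← hstep, ih (greedyStep G f ↑x) hf' u]

lemma greedy_induce (G : SimpleGraph V) (s : Set V) (L : List ↥s) (u : ↥s) :
    greedy (G.induce s) L u = greedy G (L.map Subtype.val) ↑u := by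
  unfold greedy
  exact greedyFrom_induce G s L (fun _ => 0) (fun _ _ => rfl) u

/-- transfer of greedyFrom along isomorphisms -/
lemma greedyFrom_iso {W W' : Type*} {G : SimpleGraph W} {G' : SimpleGraph W'}
    (e : G ≃g G') :
    ∀ (L : List W) (f : W → ℕ) (x : W),
      greedyFrom G' (fun z => f (e.symm z)) (L.map e) (e x) = greedyFrom G f L x := by
  intro L
  induction L with
  | nil =>
    intro f x
    show f (e.symm (e x)) = f x
    rw [RelIso.symm_apply_apply]
  | cons y t ih =>
    intro f x
    rw [List.map_cons, greedyFrom_cons, greedyFrom_cons]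
    have hstep : (fun z => greedyStep G f y (e.symm z))
        = greedyStep G' (fun z => f (e.symm z)) (e y) := by
      funext z
      by_cases hz : z = e y
      · subst hz
        rw [RelIso.symm_apply_apply, greedyStep_self, greedyStep_self]
        congr 1
        ext c
        simp only [Set.mem_setOf_eq, and_congr_right_iff]
        intro hc
        constructor
        · intro h w hw
          have : G.Adj y (e.symm w) := by
            have := e.symm.map_adj_iff.mpr hw
            rwa [RelIso.symm_apply_apply] at this
          exact h _ this
        · intro h w hw
          have hw' : G'.Adj (e y) (e w) := e.map_adj_iff.mpr hw
          have := h (e w) hw'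
          rwa [RelIso.symm_apply_apply] at this
      · have hz' : e.symm z ≠ y := fun h => hz (by rw [← h, RelIso.apply_symm_apply])
        rw [greedyStep_ne G f hz', greedyStep_ne _ _ hz]
    rw [← hstep, ih (greedyStep G f y) x]

lemma greedy_iso {W W' : Type*} {G : SimpleGraph W} {G' : SimpleGraph W'}
    (e : G ≃g G') (L : List W) (x : W) :
    greedy G' (L.map e) (e x) = greedy G L x := by
  unfold greedy
  exact greedyFrom_iso e L (fun _ => 0) x

lemma isConnOrder_map_iso {W W' : Type*} {G : SimpleGraph W} {G' : SimpleGraph W'}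
    (e : G ≃g G') (L : List W) (h : IsConnOrder G L) : IsConnOrder G' (L.map e) := by
  obtain ⟨hnd, hmem, hconn⟩ := h
  refine ⟨hnd.map (RelIso.injective e), ?_, ?_⟩
  · intro w
    rcases hmem (e.symm w) with h
    have := List.mem_map_of_mem (f := ⇑e) h
    rwa [RelIso.apply_symm_apply] at this
  · intro i hi
    have hlen : (L.map ⇑e).length = L.length := List.length_map ⇑e
    have hi' : (i : ℕ) < L.length := by omega
    rcases hconn ⟨i, hi'⟩ hi with ⟨j, hj, hadj⟩
    refine ⟨⟨j, by omega⟩, hj, ?_⟩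
    have h1 : (L.map ⇑e).get ⟨j, by omega⟩ = e (L.get ⟨(j : ℕ), by omega⟩) := by
      simp [List.get_eq_getElem, List.getElem_map]
    have h2 : (L.map ⇑e).get i = e (L.get ⟨(i : ℕ), hi'⟩) := by
      simp [List.get_eq_getElem, List.getElem_map]
    rw [h1, h2]
    exact e.map_adj_iff.mpr hadj

lemma connected_of_isConnOrder {W : Type*} {H : SimpleGraph W} {m : List W}
    (hm : IsConnOrder H m) (hne : m ≠ []) : H.Connected := by
  obtain ⟨hnd, hmem, hconn⟩ := hm
  have hlen : 0 < m.length := List.length_pos_iff.mpr hne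
  have key : ∀ n : ℕ, ∀ h : n < m.length, H.Reachable (m.get ⟨0, hlen⟩) (m.get ⟨n, h⟩) := by
    intro n
    induction n using Nat.strong_induction_on with
    | _ n ih =>
      intro h
      match n with
      | 0 => exact SimpleGraph.Reachable.refl _
      | n + 1 =>
        rcases hconn ⟨n+1, h⟩ (Nat.succ_pos n) with ⟨j, hj, hadj⟩
        exact (ih j hj j.2).trans hadj.reachable
  haveI hne' : Nonempty W := ⟨m.get ⟨0, hlen⟩⟩
  refine ⟨fun u v => ?_⟩
  have hu : u ∈ m := hmem u
  have hv : v ∈ m := hmem v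
  have h1 := key (idx m u) (idx_lt_length hu)
  have h2 := key (idx m v) (idx_lt_length hv)
  rw [get_idx (idx_lt_length hu)] at h1
  rw [get_idx (idx_lt_length hv)] at h2
  exact h1.symm.trans h2

lemma chi_colorable {W : Type*} [Fintype W] (H : SimpleGraph W) : H.Colorable (chi H) := by
  have h : ({n : ℕ | H.Colorable n}).Nonempty := ⟨Fintype.card W, by exact H.colorable_of_fintype⟩
  have := Nat.sInf_mem h
  exact this

lemma chi_le_of_colorable {W : Type*} [Fintype W] (H : SimpleGraph W) {n : ℕ}
    (h : H.Colorable n) : chi H ≤ n := Nat.sInf_le h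

lemma chi_le_of_embedding {W W' : Type*} [Fintype W] [Fintype W']
    {H : SimpleGraph W} {H' : SimpleGraph W'} (e : H ↪g H') : chi H ≤ chi H' :=
  chi_le_of_colorable H ((chi_colorable H').of_hom e.toHom)

lemma chi_eq_of_iso {W W' : Type*} [Fintype W] [Fintype W']
    {H : SimpleGraph W} {H' : SimpleGraph W'} (e : H ≃g H') : chi H = chi H' :=
  le_antisymm (chi_le_of_embedding e.toEmbedding) (chi_le_of_embedding e.symm.toEmbedding)

lemma chi_instance_irrel {W : Type*} (i1 i2 : Fintype W) (H : SimpleGraph W) :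
    @chi W i1 H = @chi W i2 H := by
  cases Subsingleton.elim i1 i2
  rfl

lemma isConnOrder_pmap {s : Set V} (G : SimpleGraph V) (Lv : List V)
    (hmem : ∀ x ∈ Lv, x ∈ s) (hnd : Lv.Nodup) (hcov : ∀ x ∈ s, x ∈ Lv)
    (hconn : ∀ i : Fin Lv.length, 0 < i.1 →
      ∃ j : Fin Lv.length, j.1 < i.1 ∧ G.Adj (Lv.get j) (Lv.get i)) :
    IsConnOrder (G.induce s) (Lv.pmap (fun x h => (⟨x, h⟩ : ↥s)) hmem) := by
  refine ⟨?_, ?_, ?_⟩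
  · exact hnd.pmap (fun a _ b _ h => congrArg Subtype.val h)
  · intro y
    rw [List.mem_pmap]
    exact ⟨↑y, hcov _ y.2, rfl⟩
  · intro i hi
    have hlen : (Lv.pmap (fun x h => (⟨x, h⟩ : ↥s)) hmem).length = Lv.length :=
      List.length_pmap
    have hi' : (i : ℕ) < Lv.length := by omega
    rcases hconn ⟨i, hi'⟩ hi with ⟨j, hj, hadj⟩
    refine ⟨⟨j, by omega⟩, hj, ?_⟩
    simp only [List.get_eq_getElem, List.getElem_pmap] at hadj ⊢
    exact (induce_adj_iff G _ _).mpr (by convert hadj)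

noncomputable def induceAllIso {W : Type*} (H : SimpleGraph W) (s : Set W) (hs : ∀ x, x ∈ s) :
    H.induce s ≃g H where
  toEquiv := Equiv.subtypeUnivEquiv hs
  map_rel_iff' := Iff.rfl

noncomputable def induce_finset_univ_iso {W : Type*} [Fintype W] (H : SimpleGraph W) :
    H.induce ((Finset.univ : Finset W) : Set W) ≃g H where
  toEquiv := Equiv.subtypeUnivEquiv (fun x => Finset.mem_coe.mpr (Finset.mem_univ x))
  map_rel_iff' := Iff.rfl

lemma master [Fintype V] (G : SimpleGraph V) (hmin : MinimallyBad G)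
    (A : Set V) (hA : A ≠ Set.univ) (M : List ↥A)
    (hconn : IsConnOrder (G.induce A) M) (hne : M ≠ [])
    (x : ↥A) : greedy (G.induce A) M x ≤ chi G := by
  classical
  obtain ⟨s, hs⟩ : ∃ s : Finset V, (s : Set V) = A := ⟨A.toFinset, Set.coe_toFinset A⟩
  subst hs
  have hsne : s ≠ Finset.univ := by
    intro h
    exact hA (by rw [h, Finset.coe_univ])
  have hGood : Good (G.induce (↑s : Set V)) :=
    hmin.2 s hsne (connected_of_isConnOrder hconn hne)
  have h1 := hGood Finset.univ
  have e0 := induce_finset_univ_iso (G.induce (↑s : Set V))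
  have hco2 : IsConnOrder ((G.induce (↑s : Set V)).induce
      ((Finset.univ : Finset ↥(↑s : Set V)) : Set ↥(↑s : Set V))) (M.map ⇑e0.symm) :=
    isConnOrder_map_iso e0.symm M hconn
  have hC2 := connected_of_isConnOrder hco2 (fun h => hne (List.map_eq_nil_iff.mp h))
  have hGO := h1 hC2 (M.map ⇑e0.symm) hco2
  have h2 := hGO (e0.symm x)
  rw [greedy_iso e0.symm M x] at h2
  have h3 := chi_eq_of_iso e0
  have h4 : chi (G.induce (↑s : Set V)) ≤ chi G :=
    chi_le_of_embedding (SimpleGraph.Embedding.induce (↑s : Set V))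
  omega

end Aux
theorem stmt7 {V : Type*} [Fintype V] (G : SimpleGraph V) (l : List V)
    (hmin : MinimallyBad G) (hbad : BadOrder G l)
    (S : Finset V) (hclique : G.IsClique (↑S : Set V))
    (hcut : ¬ (G.induce ((↑S : Set V)ᶜ)).Preconnected)
    (c : (G.induce ((↑S : Set V)ᶜ)).ConnectedComponent)
    (v : V) (hv : v ∈ Subtype.val '' c.supp)
    (hvmin : ∀ u ∈ Subtype.val '' c.supp, idx l v ≤ idx l u)
    (hSv : ∀ u ∈ S, idx l u < idx l v)
    (hcomplete : ∀ u ∈ S, G.Adj v u) :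
    ∃ u : V, (u ∈ S ∨ u = v) ∧ S.card + 1 < greedy G l u := by
  classical
  obtain ⟨⟨hnd, hml, hconnl⟩, hnotgood⟩ := hbad
  by_contra hcon
  push_neg at hcon
  -- basic facts
  have hlne : l ≠ [] := fun h => by simpa [h] using hml v
  have hGconn : G.Connected := connected_of_isConnOrder ⟨hnd, hml, hconnl⟩ hlne
  set K : Set V := Subtype.val '' c.supp with hKdef
  obtain ⟨v', hv', hvval⟩ := hv
  have hvK : v ∈ K := ⟨v', hv', hvval⟩
  have hKcomplS : ∀ x ∈ K, x ∉ (↑S : Set V) := by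
    rintro x ⟨x', _, rfl⟩; exact x'.2
  have hvS : v ∉ (↑S : Set V) := hKcomplS v hvK
  have hKsupp : ∀ (x : V) (hx : x ∈ ((↑S : Set V))ᶜ), x ∈ K →
      (G.induce ((↑S : Set V)ᶜ)).connectedComponentMk ⟨x, hx⟩ = c := by
    rintro x hx ⟨x', hx', hxval⟩
    have hxx : x' = ⟨x, hx⟩ := Subtype.ext hxval
    rw [← hxx]
    exact (SimpleGraph.ConnectedComponent.mem_supp_iff _ _).mp hx'
  have hKclosed : ∀ x y : V, x ∈ K → y ∈ ((↑S : Set V))ᶜ → G.Adj x y → y ∈ K := by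
    rintro x y hxK hy hadj
    have hx : x ∈ ((↑S : Set V))ᶜ := by
      rcases hxK with ⟨x', _, rfl⟩; exact x'.2
    refine ⟨⟨y, hy⟩, ?_, rfl⟩
    rw [SimpleGraph.ConnectedComponent.mem_supp_iff]
    rw [← hKsupp x hx hxK]
    apply SimpleGraph.ConnectedComponent.sound
    have hadj' : (G.induce ((↑S : Set V)ᶜ)).Adj ⟨y, hy⟩ ⟨x, hx⟩ :=
      (induce_adj_iff G _ _).mpr hadj.symm
    exact hadj'.reachable
  have hKnbr : ∀ x ∈ K, ∀ w, G.Adj x w → w ∈ (↑S : Set V) ∪ K := by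
    intro x hx w hadj
    by_cases hw : w ∈ (↑S : Set V)
    · exact Or.inl hw
    · exact Or.inr (hKclosed x w hx hw hadj)
  -- S is nonempty
  have hSne : S.Nonempty := by
    rw [Finset.nonempty_iff_ne_empty]
    intro h
    subst h
    apply hcut
    intro a b
    have hr := hGconn.preconnected ↑a ↑b
    set e1 := induceAllIso G (((↑(∅ : Finset V) : Set V))ᶜ) (by simp) with he1
    have hmap := SimpleGraph.Reachable.map e1.symm.toHom hr
    have ha : a = e1.symm.toHom ↑a := Subtype.ext rfl
    have hb : b = e1.symm.toHom ↑b := Subtype.ext rfl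
    rw [ha, hb]
    exact hmap
  -- some vertex outside S ∪ K
  have hDne : ∃ d, d ∈ ((↑S : Set V))ᶜ ∧ d ∉ K := by
    by_contra h
    push_neg at h
    apply hcut
    intro a b
    have h1 := hKsupp ↑a a.2 (h ↑a a.2)
    have h2 := hKsupp ↑b b.2 (h ↑b b.2)
    exact SimpleGraph.ConnectedComponent.exact (h1.trans h2.symm)
  -- ordering facts
  have hvx : ∀ x ∈ K, idx l v ≤ idx l x := hvmin
  have hSx : ∀ u ∈ S, ∀ x ∈ K, idx l u < idx l x :=
    fun u hu x hx => lt_of_lt_of_le (hSv u hu) (hvx x hx)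
  have hvx' : ∀ x ∈ K, x ≠ v → idx l v < idx l x := by
    intro x hx hne
    rcases Nat.lt_or_ge (idx l v) (idx l x) with h | h
    · exact h
    · exact absurd (idx_inj hnd (hml v) (hml x) (le_antisymm (hvx x hx) h)).symm hne
  -- colouring facts
  have hpos : ∀ x : V, 1 ≤ greedy G l x := fun x => greedy_pos G hnd (hml x)
  have hadjne : ∀ a b : V, G.Adj a b → greedy G l a ≠ greedy G l b :=
    fun a b h => greedy_adj_ne G hnd (hml a) (hml b) h
  have hspecl : ∀ (x : V), x ∈ l → greedy G l x = sInf {c : ℕ | 1 ≤ c ∧ ∀ w, G.Adj x w →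
      (if w ∈ l.drop (idx l x + 1) then 0 else greedy G l w) ≠ c} := by
    intro x hx
    have h := greedyFrom_spec G l hnd (fun _ => 0) (idx l x) (idx_lt_length hx)
    rw [get_idx (idx_lt_length hx)] at h
    exact h
  -- the clique A = insert v S
  set n := S.card with hndef
  have hvnS : v ∉ S := fun h => hvS (Finset.mem_coe.mpr h)
  set A : Finset V := insert v S with hAdef
  have hmemA : ∀ x, x ∈ A ↔ x = v ∨ x ∈ S := by
    intro x; rw [hAdef]; exact Finset.mem_insert
  have hAcard : A.card = n + 1 := by rw [hAdef, Finset.card_insert_of_notMem hvnS]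
  have hAclique : ∀ a ∈ A, ∀ b ∈ A, a ≠ b → G.Adj a b := by
    intro a ha b hb hab
    rcases (hmemA a).mp ha with rfl | ha'
    · rcases (hmemA b).mp hb with rfl | hb'
      · exact absurd rfl hab
      · exact hcomplete b hb'
    · rcases (hmemA b).mp hb with rfl | hb'
      · exact (hcomplete a ha').symm
      · exact hclique (Finset.mem_coe.mpr ha') (Finset.mem_coe.mpr hb') hab
  have hAinj : ∀ a ∈ A, ∀ b ∈ A, greedy G l a = greedy G l b → a = b := by
    intro a ha b hb h
    by_contra hne2
    exact hadjne a b (hAclique a ha b hb hne2) h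
  have hAub : ∀ a ∈ A, greedy G l a ≤ n + 1 := by
    intro a ha
    rcases (hmemA a).mp ha with rfl | ha'
    · exact hcon a (Or.inr rfl)
    · exact hcon a (Or.inl ha')
  have hAU : ∀ a ∈ A, a ∈ (↑S : Set V) ∪ K := by
    intro a ha
    rcases (hmemA a).mp ha with rfl | ha'
    · exact Or.inr hvK
    · exact Or.inl (Finset.mem_coe.mpr ha')
  have himg : A.image (greedy G l) = Finset.Icc 1 (n+1) := by
    apply Finset.eq_of_subset_of_card_le
    · intro k hk
      obtain ⟨a, ha, rfl⟩ := Finset.mem_image.mp hk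
      exact Finset.mem_Icc.mpr ⟨hpos a, hAub a ha⟩
    · have hinj : Set.InjOn (greedy G l) ↑A := fun a ha b hb h =>
        hAinj a (Finset.mem_coe.mp ha) b (Finset.mem_coe.mp hb) h
      rw [Finset.card_image_of_injOn hinj, hAcard, Nat.card_Icc]
      omega
  have hqex : ∀ k ∈ Finset.Icc 1 (n+1), ∃ a, a ∈ A ∧ greedy G l a = k := by
    intro k hk
    rw [← himg] at hk
    obtain ⟨a, ha, hak⟩ := Finset.mem_image.mp hk
    exact ⟨a, ha, hak⟩
  obtain ⟨q, hqprop⟩ : ∃ q : ℕ → V, ∀ k ∈ Finset.Icc 1 (n+1),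
      q k ∈ A ∧ greedy G l (q k) = k := by
    refine ⟨fun k => if h : k ∈ Finset.Icc 1 (n+1) then (hqex k h).choose else v, ?_⟩
    intro k hk
    simp only [dif_pos hk]
    exact (hqex k hk).choose_spec
  have hqA : ∀ k ∈ Finset.Icc 1 (n+1), q k ∈ A := fun k hk => (hqprop k hk).1
  have hqπ : ∀ k ∈ Finset.Icc 1 (n+1), greedy G l (q k) = k := fun k hk => (hqprop k hk).2
  have hIcc : ∀ i : ℕ, i < n+1 → i+1 ∈ Finset.Icc 1 (n+1) :=
    fun i h => Finset.mem_Icc.mpr ⟨by omega, by omega⟩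
  -- the list Q of clique vertices sorted by colour
  have hQlen0 : ((List.range (n+1)).map (fun i => q (i+1))).length = n+1 := by simp
  have hQget0 : ∀ (i : ℕ) (h : i < ((List.range (n+1)).map (fun i => q (i+1))).length),
      ((List.range (n+1)).map (fun i => q (i+1))).get ⟨i, h⟩ = q (i+1) := by
    intro i h
    simp [List.get_eq_getElem]
  have hQnodup0 : ((List.range (n+1)).map (fun i => q (i+1))).Nodup := by
    refine List.Nodup.map_on ?_ List.nodup_range
    intro a ha b hb hab
    have h1 := hqπ (a+1) (hIcc a (List.mem_range.mp ha))
    have h2 := hqπ (b+1) (hIcc b (List.mem_range.mp hb))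
    rw [hab] at h1
    omega
  set Q : List V := (List.range (n+1)).map (fun i => q (i+1)) with hQdef
  have hQlen : Q.length = n+1 := hQlen0
  have hQget : ∀ (i : ℕ) (h : i < Q.length), Q.get ⟨i, h⟩ = q (i+1) := hQget0
  have hQnodup : Q.Nodup := hQnodup0
  clear hQlen0 hQget0 hQnodup0
  have hQmemA : ∀ a ∈ Q, a ∈ A := by
    intro a ha
    rw [hQdef] at ha
    obtain ⟨i, hi, rfl⟩ := List.mem_map.mp ha
    exact hqA _ (hIcc i (List.mem_range.mp hi))
  have hAmemQ : ∀ a ∈ A, a ∈ Q := by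
    intro a ha
    have hk : greedy G l a ∈ Finset.Icc 1 (n+1) := Finset.mem_Icc.mpr ⟨hpos a, hAub a ha⟩
    have hqa : q (greedy G l a) = a := hAinj _ (hqA _ hk) _ ha (hqπ _ hk)
    have h1 : greedy G l a - 1 < n + 1 := by
      have := (Finset.mem_Icc.mp hk).2; have := hpos a; omega
    rw [hQdef]
    refine List.mem_map.mpr ⟨greedy G l a - 1, List.mem_range.mpr h1, ?_⟩
    have h2 : greedy G l a - 1 + 1 = greedy G l a := by have := hpos a; omega
    rw [h2, hqa]
  have hidxq : ∀ (i : ℕ) (h : i < n+1), idx Q (q (i+1)) = i := by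
    intro i h
    have h2 : i < Q.length := by omega
    have h3 := idx_get' hQnodup h2
    rw [hQget i h2] at h3
    exact h3
  have hQπ : ∀ a ∈ Q, greedy G l a = idx Q a + 1 := by
    intro a ha
    have hlt : idx Q a < Q.length := idx_lt_length ha
    have h1 : Q.get ⟨idx Q a, hlt⟩ = q (idx Q a + 1) := hQget _ hlt
    have h2 : Q.get ⟨idx Q a, hlt⟩ = a := get_idx hlt
    have hlt2 : idx Q a < n + 1 := by rw [← hQlen]; exact hlt
    conv_lhs => rw [← h2, h1]
    exact hqπ _ (hIcc _ hlt2)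
  -- the list R of the remaining vertices of the component, in l-order
  set pK : V → Bool := fun x => decide (x ∈ K ∧ x ≠ v) with hpKdef
  set R : List V := l.filter pK with hRdef
  have hRmem : ∀ x, x ∈ R ↔ x ∈ K ∧ x ≠ v := by
    intro x
    rw [hRdef, List.mem_filter, hpKdef]
    simp [hml x]
  have hRnodup : R.Nodup := hRdef ▸ hnd.filter pK
  have hQR : ∀ a, a ∈ Q → a ∈ R → False := by
    intro a haQ haR
    obtain ⟨haK, hav⟩ := (hRmem a).mp haR
    rcases (hmemA a).mp (hQmemA a haQ) with rfl | haS
    · exact hav rfl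
    · exact hKcomplS a haK (Finset.mem_coe.mpr haS)
  -- facts about Q ++ R, stated before abbreviating
  have hL1len0 : (Q ++ R).length = (n+1) + R.length := by
    rw [List.length_append, hQlen]
  have hL1getQ0 : ∀ (i : ℕ) (hi : i < n+1) (h : i < (Q ++ R).length),
      (Q ++ R).get ⟨i, h⟩ = q (i+1) := by
    intro i hi h
    have h2 : i < Q.length := by omega
    have e1 : (Q ++ R).get ⟨i, h⟩ = Q.get ⟨i, h2⟩ := by
      simp [List.get_eq_getElem, List.getElem_append_left h2]
    rw [e1, hQget i h2]
  have hL1getR0 : ∀ (i : ℕ) (hge : n+1 ≤ i) (h : i < (Q ++ R).length)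
      (hm : i - (n+1) < R.length), (Q ++ R).get ⟨i, h⟩ = R.get ⟨i - (n+1), hm⟩ := by
    intro i hge h hm
    have h2 : Q.length ≤ i := by omega
    simp only [List.get_eq_getElem]
    rw [List.getElem_append_right h2]
    congr 1
    omega
  have hidxL1Q0 : ∀ a ∈ Q, idx (Q ++ R) a = idx Q a := by
    intro a ha
    simp only [idx_indexOf]
    exact List.idxOf_append_of_mem ha
  have hidxL1R0 : ∀ a ∈ R, idx (Q ++ R) a = (n+1) + idx R a := by
    intro a ha
    have haQ : a ∉ Q := fun h => hQR a h ha
    simp only [idx_indexOf]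
    rw [List.idxOf_append_of_notMem haQ, hQlen]
  set L1 : List V := Q ++ R with hL1def
  have hL1len : L1.length = (n+1) + R.length := hL1len0
  have hL1getQ : ∀ (i : ℕ) (hi : i < n+1) (h : i < L1.length),
      L1.get ⟨i, h⟩ = q (i+1) := hL1getQ0
  have hL1getR : ∀ (i : ℕ) (hge : n+1 ≤ i) (h : i < L1.length)
      (hm : i - (n+1) < R.length), L1.get ⟨i, h⟩ = R.get ⟨i - (n+1), hm⟩ := hL1getR0
  have hidxL1Q : ∀ a ∈ Q, idx L1 a = idx Q a := hidxL1Q0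
  have hidxL1R : ∀ a ∈ R, idx L1 a = (n+1) + idx R a := hidxL1R0
  clear hL1len0 hL1getQ0 hL1getR0 hidxL1Q0 hidxL1R0
  have hL1nodup : L1.Nodup := by
    rw [hL1def, List.nodup_append]
    exact ⟨hQnodup, hRnodup, fun a haQ b hbR hab => hQR a haQ (hab ▸ hbR)⟩
  set U : Set V := (↑S : Set V) ∪ K with hUdef
  have hL1mem : ∀ x, x ∈ L1 ↔ x ∈ U := by
    intro x
    rw [hL1def, List.mem_append]
    constructor
    · rintro (h | h)
      · exact hAU x (hQmemA x h)
      · exact Or.inr ((hRmem x).mp h).1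
    · rintro (h | h)
      · exact Or.inl (hAmemQ x ((hmemA x).mpr (Or.inr (Finset.mem_coe.mp h))))
      · by_cases hxv : x = v
        · exact Or.inl (hAmemQ x ((hmemA x).mpr (Or.inl hxv)))
        · exact Or.inr ((hRmem x).mpr ⟨h, hxv⟩)
  -- the greedy colouring along L1 agrees with the one along l on U
  have hgreedyL1 : ∀ u, greedyFrom G (fun _ => 0) L1 u
      = (if u ∈ U then greedy G l u else 0) := by
    apply greedyFrom_char G L1 hL1nodup
    · intro u hu
      exact if_neg (fun hU => hu ((hL1mem u).mpr hU))
    · intro i h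
      by_cases hiQ : i < n + 1
      · -- clique part
        have hx : L1.get ⟨i, h⟩ = q (i+1) := hL1getQ i hiQ h
        rw [hx]
        have hqmem : q (i+1) ∈ A := hqA _ (hIcc i hiQ)
        have hqU : q (i+1) ∈ U := hAU _ hqmem
        rw [if_pos hqU, hqπ _ (hIcc i hiQ)]
        refine (sInf_eq_of_mem (i+1) _ ?_ ?_).symm
        · refine ⟨by omega, ?_⟩
          intro w hadj
          by_cases hwd : w ∈ L1.drop (i+1)
          · rw [if_pos hwd]; omega
          · rw [if_neg hwd]
            by_cases hwU : w ∈ U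
            · rw [if_pos hwU]
              have hwL1 : w ∈ L1 := (hL1mem w).mpr hwU
              have hidxw : idx L1 w ≤ i := by
                by_contra hgt
                push_neg at hgt
                exact hwd ((mem_drop_iff_le_idx L1 hL1nodup w hwL1 (i+1)).mpr hgt)
              have hwQ : w ∈ Q := by
                by_contra hwQ'
                have hwR : w ∈ R := by
                  rw [hL1def, List.mem_append] at hwL1
                  rcases hwL1 with h1 | h1
                  · exact absurd h1 hwQ'
                  · exact h1
                have := hidxL1R w hwR
                omega
              rw [hidxL1Q w hwQ] at hidxw
              have hπw := hQπ w hwQ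
              intro hcontra
              have hi2 : idx Q w = i := by omega
              have hwq : w = q (i+1) := by
                refine idx_inj hQnodup hwQ (hAmemQ _ hqmem) ?_
                rw [hidxq i hiQ, hi2]
              exact (G.ne_of_adj hadj) hwq.symm
            · rw [if_neg hwU]; omega
        · intro b hb hbset
          obtain ⟨hb1, hb2⟩ := hbset
          have hbIcc : b ∈ Finset.Icc 1 (n+1) := Finset.mem_Icc.mpr ⟨hb1, by omega⟩
          have hwA : q b ∈ A := hqA _ hbIcc
          have hwQ : q b ∈ Q := hAmemQ _ hwA
          have hwne : q b ≠ q (i+1) := by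
            intro e
            have e1 := hqπ _ hbIcc
            rw [e, hqπ _ (hIcc i hiQ)] at e1
            omega
          have hadj := hAclique _ hqmem _ hwA hwne.symm
          have hval := hb2 (q b) hadj
          have hidxqb : idx Q (q b) = b - 1 := by
            have h5 := hidxq (b-1) (by omega)
            have hb' : b - 1 + 1 = b := by omega
            rw [hb'] at h5
            exact h5
          have hqbL1 : q b ∈ L1 := (hL1mem _).mpr (hAU _ hwA)
          have hnd2 : q b ∉ L1.drop (i+1) := by
            rw [mem_drop_iff_le_idx L1 hL1nodup _ hqbL1, hidxL1Q _ hwQ, hidxqb]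
            omega
          rw [if_neg hnd2, if_pos (hAU _ hwA), hqπ _ hbIcc] at hval
          exact hval rfl
      · -- component part
        push_neg at hiQ
        have hm : i - (n+1) < R.length := by
          rw [hL1len] at h; omega
        have hx : L1.get ⟨i, h⟩ = R.get ⟨i - (n+1), hm⟩ := hL1getR i hiQ h hm
        rw [hx]
        set x := R.get ⟨i - (n+1), hm⟩ with hxdef
        have hxR : x ∈ R := List.get_mem R ⟨_, hm⟩
        obtain ⟨hxK, hxv⟩ := (hRmem x).mp hxR
        have hxU : x ∈ U := Or.inr hxK
        have hxl : x ∈ l := hml x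
        rw [if_pos hxU, hspecl x hxl]
        refine congrArg sInf (forbid_congr G x _ _ ?_)
        intro w hadj
        have hwU : w ∈ U := hKnbr x hxK w hadj
        have hwl : w ∈ l := hml w
        have hwL1 : w ∈ L1 := (hL1mem w).mpr hwU
        have hidxL1x : idx L1 x = i := by
          have e1 := idx_get' hL1nodup h
          rw [hx] at e1
          exact e1
        by_cases hwA : w ∈ A
        · have hwbefore : idx l w < idx l x := by
            rcases (hmemA w).mp hwA with rfl | hwS
            · exact hvx' x hxK hxv
            · exact hSx w hwS x hxK
          have h1 : w ∉ l.drop (idx l x + 1) := by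
            rw [mem_drop_iff_le_idx l hnd w hwl]; omega
          have hwQ : w ∈ Q := hAmemQ w hwA
          have h2 : w ∉ L1.drop (i+1) := by
            rw [mem_drop_iff_le_idx L1 hL1nodup w hwL1, hidxL1Q w hwQ]
            have h3 : idx Q w < Q.length := idx_lt_length hwQ
            rw [hQlen] at h3
            omega
          rw [if_neg h1, if_neg h2, if_pos hwU]
        · have hwK : w ∈ K := by
            rcases hwU with h1 | h1
            · exact absurd ((hmemA w).mpr (Or.inr (Finset.mem_coe.mp h1))) hwA
            · exact h1
          have hwv : w ≠ v := fun e => hwA ((hmemA w).mpr (Or.inl e))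
          have hwR : w ∈ R := (hRmem w).mpr ⟨hwK, hwv⟩
          have hxRidx : (n+1) + idx R x = i := by
            rw [← hidxL1R x hxR]
            exact hidxL1x
          have hbf := before_filter_iff hnd pK (hRdef ▸ hxR) (hRdef ▸ hwR)
          rw [← hRdef] at hbf
          have hiff : w ∈ L1.drop (i+1) ↔ w ∈ l.drop (idx l x + 1) := by
            rw [mem_drop_iff_le_idx L1 hL1nodup w hwL1,
              mem_drop_iff_le_idx l hnd w hwl, hidxL1R w hwR]
            omega
          by_cases hwdrop : w ∈ L1.drop (i+1)
          · rw [if_pos hwdrop, if_pos (hiff.mp hwdrop)]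
          · rw [if_neg hwdrop, if_neg (fun hh => hwdrop (hiff.mpr hh)), if_pos hwU]
  -- L1 is a connected order for the induced subgraph on U
  have hL1U : ∀ x ∈ L1, x ∈ U := fun x hx => (hL1mem x).mp hx
  have hL1conn : ∀ i : Fin L1.length, 0 < i.1 →
      ∃ j : Fin L1.length, j.1 < i.1 ∧ G.Adj (L1.get j) (L1.get i) := by
    intro i hi
    by_cases hiQ : i.1 < n+1
    · have h0 : (0:ℕ) < L1.length := by omega
      refine ⟨⟨0, h0⟩, hi, ?_⟩
      have e0 : L1.get ⟨0, h0⟩ = q 1 := hL1getQ 0 (by omega) h0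
      have e1 : L1.get i = q (i.1+1) := by
        have := hL1getQ i.1 hiQ i.2
        exact this
      rw [e0, e1]
      refine hAclique _ (hqA _ (hIcc 0 (by omega))) _ (hqA _ (hIcc i.1 hiQ)) ?_
      intro e
      have e2 := hqπ _ (hIcc 0 (by omega))
      have e3 := hqπ _ (hIcc i.1 hiQ)
      rw [e] at e2
      omega
    · push_neg at hiQ
      have hm : i.1 - (n+1) < R.length := by
        have h5 := i.2; have h6 := hL1len; omega
      have hx : L1.get i = R.get ⟨i.1 - (n+1), hm⟩ := hL1getR i.1 hiQ i.2 hm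
      set x := R.get ⟨i.1 - (n+1), hm⟩ with hxdef
      have hxR : x ∈ R := List.get_mem R ⟨_, hm⟩
      obtain ⟨hxK, hxv⟩ := (hRmem x).mp hxR
      have hxl : x ∈ l := hml x
      have hxpos : 0 < idx l x := by
        obtain ⟨s0, hs0⟩ := hSne
        have := hSx s0 hs0 x hxK
        omega
      obtain ⟨j, hj, hadj⟩ := hconnl ⟨idx l x, idx_lt_length hxl⟩ hxpos
      have hj' : j.1 < idx l x := hj
      have hadj' : G.Adj (l.get j) x := by
        rw [get_idx (idx_lt_length hxl)] at hadj
        exact hadj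
      set w := l.get j with hwdef
      have hwl : w ∈ l := List.get_mem l j
      have hwidx : idx l w = j.1 := idx_get hnd j
      have hwU : w ∈ U := hKnbr x hxK w hadj'.symm
      have hwL1 : w ∈ L1 := (hL1mem w).mpr hwU
      have hidxL1x : idx L1 x = i.1 := by
        have e1 := idx_get hL1nodup i
        rw [hx] at e1
        exact e1
      have hwL1lt : idx L1 w < i.1 := by
        by_cases hwQ : w ∈ Q
        · have h3 : idx Q w < Q.length := idx_lt_length hwQ
          rw [hQlen] at h3
          rw [hidxL1Q w hwQ]
          omega
        · have hwR : w ∈ R := by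
            rcases List.mem_append.mp (hL1def ▸ hwL1) with h1 | h1
            · exact absurd h1 hwQ
            · exact h1
          have hbf := before_filter_iff hnd pK (hRdef ▸ hwR) (hRdef ▸ hxR)
          rw [← hRdef] at hbf
          have hxRidx : (n+1) + idx R x = i.1 := by
            rw [← hidxL1R x hxR]; exact hidxL1x
          have h4 : idx R w < idx R x := hbf.mpr (by
            have := hSx; omega)
          rw [hidxL1R w hwR]
          omega
      refine ⟨⟨idx L1 w, idx_lt_length hwL1⟩, hwL1lt, ?_⟩
      rw [get_idx (idx_lt_length hwL1), hx]
      exact hadj'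
  have hM1conn := isConnOrder_pmap G L1 hL1U hL1nodup
    (fun x hx => (hL1mem x).mpr hx) hL1conn
  have hUne : U ≠ Set.univ := by
    obtain ⟨d, hd1, hd2⟩ := hDne
    intro e
    have hdU : d ∈ U := e ▸ Set.mem_univ d
    rcases hdU with h1 | h1
    · exact hd1 h1
    · exact hd2 h1
  have hM1ne : (L1.pmap (fun x h => (⟨x, h⟩ : ↥U)) hL1U) ≠ [] := by
    intro e
    have hvL1 : v ∈ L1 := (hL1mem v).mpr (Or.inr hvK)
    have hin : (⟨v, Or.inr hvK⟩ : ↥U) ∈ L1.pmap (fun x h => (⟨x, h⟩ : ↥U)) hL1U :=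
      List.mem_pmap.mpr ⟨v, hvL1, rfl⟩
    rw [e] at hin
    simp at hin
  have hKbound : ∀ x, x ∈ U → greedy G l x ≤ chi G := by
    intro x hx
    have hm := master G hmin U hUne _ hM1conn hM1ne ⟨x, hx⟩
    rw [greedy_induce G U _ ⟨x, hx⟩] at hm
    have hmap : (L1.pmap (fun x h => (⟨x, h⟩ : ↥U)) hL1U).map Subtype.val = L1 := by
      rw [List.map_pmap]
      exact (List.pmap_eq_map _).trans (List.map_id _)
    rw [hmap] at hm
    have he := hgreedyL1 x
    rw [if_pos hx] at he
    rw [← he]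
    exact hm
  -- Part 2 : vertices outside K
  set pT : V → Bool := fun x => decide (x ∉ K) with hpTdef
  set l2 : List V := l.filter pT with hl2def
  have hl2mem : ∀ x, x ∈ l2 ↔ x ∉ K := by
    intro x
    rw [hl2def, List.mem_filter, hpTdef]
    simp [hml x]
  have hl2nodup : l2.Nodup := hl2def ▸ hnd.filter pT
  have hgreedyl2 : ∀ u, greedyFrom G (fun _ => 0) l2 u
      = (if u ∈ K then 0 else greedy G l u) := by
    apply greedyFrom_char G l2 hl2nodup
    · intro u hu
      by_cases huK : u ∈ K
      · rw [if_pos huK]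
      · exact absurd ((hl2mem u).mpr huK) hu
    · intro i h
      set x := l2.get ⟨i, h⟩ with hxdef
      have hxl2 : x ∈ l2 := List.get_mem l2 ⟨i, h⟩
      have hxK : x ∉ K := (hl2mem x).mp hxl2
      have hxl : x ∈ l := hml x
      rw [if_neg hxK, hspecl x hxl]
      refine congrArg sInf (forbid_congr G x _ _ ?_)
      intro w hadj
      have hwl : w ∈ l := hml w
      by_cases hwK : w ∈ K
      · have hxS : x ∈ (↑S : Set V) := by
          rcases hKnbr w hwK x hadj.symm with h1 | h1
          · exact h1
          · exact absurd h1 hxK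
        have hlt : idx l x < idx l w := hSx x (Finset.mem_coe.mp hxS) w hwK
        have h1 : w ∈ l.drop (idx l x + 1) :=
          (mem_drop_iff_le_idx l hnd w hwl _).mpr (by omega)
        have h2 : w ∉ l2 := fun hh => ((hl2mem w).mp hh) hwK
        have h3 : w ∉ l2.drop (i+1) := fun hh => h2 (List.mem_of_mem_drop hh)
        rw [if_pos h1, if_neg h3, if_pos hwK]
      · have hwl2 : w ∈ l2 := (hl2mem w).mpr hwK
        have e1 : idx l2 x = i := by
          have := idx_get' hl2nodup h
          rw [← hxdef] at this
          exact this
        have hbf := before_filter_iff hnd pT (hl2def ▸ hxl2) (hl2def ▸ hwl2)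
        rw [← hl2def] at hbf
        have hiff : w ∈ l.drop (idx l x + 1) ↔ w ∈ l2.drop (i+1) := by
          rw [mem_drop_iff_le_idx l hnd w hwl, mem_drop_iff_le_idx l2 hl2nodup w hwl2]
          omega
        by_cases hwd : w ∈ l.drop (idx l x + 1)
        · rw [if_pos hwd, if_pos (hiff.mp hwd)]
        · rw [if_neg hwd, if_neg (fun hh => hwd (hiff.mpr hh)), if_neg hwK]
  have hl2T : ∀ x ∈ l2, x ∈ (Kᶜ : Set V) := fun x hx => (hl2mem x).mp hx
  have hl2conn : ∀ i : Fin l2.length, 0 < i.1 →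
      ∃ j : Fin l2.length, j.1 < i.1 ∧ G.Adj (l2.get j) (l2.get i) := by
    intro i hi
    have h0 : 0 < l2.length := by omega
    set x := l2.get i with hxdef
    have hxl2 : x ∈ l2 := List.get_mem l2 i
    have hxl : x ∈ l := hml x
    have hxK : x ∉ K := (hl2mem x).mp hxl2
    have hxidx : idx l2 x = i.1 := by
      have := idx_get hl2nodup i
      rw [← hxdef] at this
      exact this
    have hxlpos : 0 < idx l x := by
      by_contra hz
      push_neg at hz
      set y := l2.get ⟨0, h0⟩ with hydef
      have hyl2 : y ∈ l2 := List.get_mem l2 ⟨0, h0⟩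
      have hyidx : idx l2 y = 0 := by
        have := idx_get' hl2nodup h0
        rw [← hydef] at this
        exact this
      have hbf := before_filter_iff hnd pT (hl2def ▸ hyl2) (hl2def ▸ hxl2)
      rw [← hl2def] at hbf
      have := hbf.mp (by omega)
      omega
    obtain ⟨j, hj, hadj⟩ := hconnl ⟨idx l x, idx_lt_length hxl⟩ hxlpos
    have hj' : j.1 < idx l x := hj
    have hadj' : G.Adj (l.get j) x := by
      rw [get_idx (idx_lt_length hxl)] at hadj
      exact hadj
    set w := l.get j with hwdef
    have hwl : w ∈ l := List.get_mem l j
    have hwidx : idx l w = j.1 := idx_get hnd j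
    have hwK : w ∉ K := by
      intro hwK'
      have hxS : x ∈ (↑S : Set V) := by
        rcases hKnbr w hwK' x hadj' with h1 | h1
        · exact h1
        · exact absurd h1 hxK
      have := hSx x (Finset.mem_coe.mp hxS) w hwK'
      omega
    have hwl2 : w ∈ l2 := (hl2mem w).mpr hwK
    have hbf := before_filter_iff hnd pT (hl2def ▸ hwl2) (hl2def ▸ hxl2)
    rw [← hl2def] at hbf
    have hltl2 : idx l2 w < idx l2 x := hbf.mpr (by omega)
    refine ⟨⟨idx l2 w, idx_lt_length hwl2⟩, by show idx l2 w < i.1; omega, ?_⟩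
    rw [get_idx (idx_lt_length hwl2)]
    exact hadj'
  have hM2conn := isConnOrder_pmap G l2 hl2T hl2nodup
    (fun x hx => (hl2mem x).mpr hx) hl2conn
  have hTne : (Kᶜ : Set V) ≠ Set.univ := by
    intro e
    have : v ∈ (Kᶜ : Set V) := e ▸ Set.mem_univ v
    exact this hvK
  have hM2ne : (l2.pmap (fun x h => (⟨x, h⟩ : ↥(Kᶜ : Set V))) hl2T) ≠ [] := by
    obtain ⟨d, hd1, hd2⟩ := hDne
    intro e
    have hdl2 : d ∈ l2 := (hl2mem d).mpr hd2
    have hin : (⟨d, hd2⟩ : ↥(Kᶜ : Set V)) ∈ l2.pmap (fun x h => (⟨x, h⟩ : ↥(Kᶜ : Set V))) hl2T :=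
      List.mem_pmap.mpr ⟨d, hdl2, rfl⟩
    rw [e] at hin
    simp at hin
  have hTbound : ∀ x, x ∉ K → greedy G l x ≤ chi G := by
    intro x hxK
    have hm := master G hmin (Kᶜ : Set V) hTne _ hM2conn hM2ne ⟨x, hxK⟩
    rw [greedy_induce G (Kᶜ : Set V) _ ⟨x, hxK⟩] at hm
    have hmap : (l2.pmap (fun x h => (⟨x, h⟩ : ↥(Kᶜ : Set V))) hl2T).map Subtype.val = l2 := by
      rw [List.map_pmap]
      exact (List.pmap_eq_map _).trans (List.map_id _)
    rw [hmap] at hm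
    have he := hgreedyl2 x
    rw [if_neg hxK] at he
    rw [← he]
    exact hm
  -- conclusion
  unfold GoodOrder at hnotgood
  push_neg at hnotgood
  obtain ⟨w0, hw0⟩ := hnotgood
  by_cases hw0K : w0 ∈ K
  · exact absurd (hKbound w0 (Or.inr hw0K)) (by omega)
  · exact absurd (hTbound w0 hw0K) (by omega)
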